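/- Energy identity for the dG(0) scheme (Theorem 4.1, case l = −1): Let (U_{1,n}, U_{2,n}) be the dG(0) approximation. Then, with W_{n,j} = U_{1,n} − U_{1,j} and the backward difference ∂_n X_n = (X_n − X_{n-1})/k_n, the following identity holds: η_N ‖U_{1,N}‖² + ρ ‖A^{−1/2} U_{2,N}‖² + Σ_{n=1}^N k_n ( −∂_n η_n ‖U_{1,n-1}‖² + k_n η_n ‖∂_n U_{1,n}‖² ) + Σ_{n=2}^N Σ_{j=1}^{n-1} ω_{n,j} ( (‖W_{n,j}‖² − ‖W_{n-1,j}‖²)/k_n + k_n ‖∂_n W_{n,j}‖² ) + ρ Σ_{n=1}^N ‖A^{−1/2}(U_{2,n} − U_{2,n-1})‖² = ‖u_0‖² + ρ ‖A^{−1/2} v_0‖² + 2 Σ_{n=1}^N k_n η_n ⟨f̄_{1,n}, U_{1,n}⟩ + 2 Σ_{n=1}^N k_n ⟨A^{−1/2} f̄_{2,n}, A^{−1/2} U_{2,n}⟩ + 2 Σ_{n=2}^N Σ_{j=1}^{n-1} ω_{n,j} ⟨f̄_{1,n}, U_{1,n} − U_{1,j}⟩. -/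

import Mathlib

open MeasureTheory Finset
open scoped RealInnerProductSpace

/-- The time step `k_n = t_n − t_{n-1}`. -/
noncomputable def kstep (tp : ℕ → ℝ) (n : ℕ) : ℝ := tp n - tp (n - 1)

/-- The resolvent function `η(t) = 1 − ∫_0^t β(s) ds`. -/
noncomputable def etaFun (β : ℝ → ℝ) (t : ℝ) : ℝ := 1 - ∫ s in (0:ℝ)..t, β s

/-- The interval averages `η_n = (1/k_n) ∫_{I_n} η(t) dt`, with `η_0 = 1`. -/
noncomputable def etaAvg (β : ℝ → ℝ) (tp : ℕ → ℝ) (n : ℕ) : ℝ :=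
  if n = 0 then 1 else (kstep tp n)⁻¹ * ∫ t in (tp (n - 1))..(tp n), etaFun β t

/-- The quadrature weights
`ω_{n,j} = ∫_{I_n} ∫_{t_{j-1}}^{min(t_j, t)} β(t − s) ds dt` for `1 ≤ j ≤ n ≤ N`. -/
noncomputable def qweight (β : ℝ → ℝ) (tp : ℕ → ℝ) (n j : ℕ) : ℝ :=
  ∫ t in (tp (n - 1))..(tp n), ∫ s in (tp (j - 1))..(min (tp j) t), β (t - s)

/-- The interval averages of the data, `f̄_n = (1/k_n) ∫_{I_n} f(t) dt`. -/
noncomputable def iavg {H : Type*} [NormedAddCommGroup H] [NormedSpace ℝ H]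
    (tp : ℕ → ℝ) (f : ℝ → H) (n : ℕ) : H :=
  (kstep tp n)⁻¹ • ∫ t in (tp (n - 1))..(tp n), f t

lemma tele_aux (g : ℕ → ℝ) (N : ℕ) :
    ∑ n ∈ Finset.Icc 1 N, (g n - g (n - 1)) = g N - g 0 := by
  rw [← Finset.Ico_add_one_right_eq_Icc, Finset.sum_Ico_eq_sum_range]
  have h : ∀ i, g (1 + i) - g (1 + i - 1) = g (i + 1) - g i := by
    intro i; congr 2 <;> omega
  simp only [Nat.add_sub_cancel, h]
  exact Finset.sum_range_sub g N

lemma stepA (β : ℝ → ℝ) (hβint : MeasureTheory.IntegrableOn β (Set.Ioi 0))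
    (tp : ℕ → ℝ) (ht0 : tp 0 = 0) (N : ℕ)
    (hmono : ∀ i j : ℕ, i ≤ j → j ≤ N → tp i ≤ tp j)
    (n : ℕ) (h1 : 1 ≤ n) (h2 : n ≤ N) :
    ∫ t in (tp (n-1))..(tp n), etaFun β t
      = kstep tp n - ∑ j ∈ Finset.Icc 1 n, qweight β tp n j := by
  set F : ℝ → ℝ := fun x => ∫ s in (0:ℝ)..x, β s with hF
  set a := tp (n-1) with ha
  set b := tp n with hb
  have hab : a ≤ b := hmono (n-1) n (Nat.sub_le n 1) h2
  have h0a : 0 ≤ a := by rw [← ht0]; exact hmono 0 (n-1) (Nat.zero_le _) (le_trans (Nat.sub_le n 1) h2)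
  have hβII : ∀ c d : ℝ, 0 ≤ c → c ≤ d → IntervalIntegrable β volume c d := by
    intro c d hc hcd
    rw [intervalIntegrable_iff, Set.uIoc_of_le hcd]
    exact hβint.mono_set (fun x hx => lt_of_le_of_lt hc hx.1)
  -- continuity of the primitive on [0, tp N]
  have hIccInt : IntegrableOn β (Set.Icc 0 (tp N)) := by
    rw [integrableOn_Icc_iff_integrableOn_Ioc]
    exact hβint.mono_set (fun x hx => hx.1)
  have hFc : ContinuousOn F (Set.Icc 0 (tp N)) := by
    apply (intervalIntegral.continuousOn_primitive hIccInt).congr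
    intro x hx
    rw [hF]
    simp only
    rw [intervalIntegral.integral_of_le hx.1]
  have hbN : b ≤ tp N := hmono n N h2 le_rfl
  -- interval integrability of shifted primitives
  have hGint : ∀ m : ℕ, tp m ≤ a → 0 ≤ tp m →
      IntervalIntegrable (fun t => F (t - tp m)) volume a b := by
    intro m hm hm0
    apply ContinuousOn.intervalIntegrable
    rw [Set.uIcc_of_le hab]
    apply hFc.comp ((continuous_id.sub continuous_const).continuousOn)
    intro t ht
    show 0 ≤ t - tp m ∧ t - tp m ≤ tp N
    exact ⟨by linarith [ht.1], by linarith [ht.2, hbN]⟩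
  have htpm : ∀ m : ℕ, m ≤ n → 0 ≤ tp m := by
    intro m hm
    rw [← ht0]; exact hmono 0 m (Nat.zero_le _) (le_trans hm h2)
  have htpa : ∀ m : ℕ, m ≤ n - 1 → tp m ≤ a := fun m hm => hmono m (n-1) hm (le_trans (Nat.sub_le n 1) h2)
  -- rewrite qweight for j < n
  have hq1 : ∀ j : ℕ, 1 ≤ j → j < n →
      qweight β tp n j = ∫ t in a..b, (F (t - tp (j-1)) - F (t - tp j)) := by
    intro j hj1 hjn
    have hj1n : j - 1 ≤ n - 1 := Nat.sub_le_sub_right (le_of_lt hjn) 1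
    have hjn1 : j ≤ n - 1 := Nat.le_sub_one_of_lt hjn
    apply intervalIntegral.integral_congr
    intro t ht
    rw [Set.uIcc_of_le hab] at ht
    have htja : tp j ≤ a := htpa j hjn1
    have h0j : 0 ≤ tp (j-1) := htpm (j-1) (le_trans (Nat.sub_le j 1) (le_of_lt hjn))
    have hjj : tp (j-1) ≤ tp j := hmono (j-1) j (Nat.sub_le j 1) (le_trans (le_of_lt hjn) h2)
    have hmin : min (tp j) t = tp j := min_eq_left (le_trans htja ht.1)
    simp only
    rw [hmin, intervalIntegral.integral_comp_sub_left β t]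
    rw [← intervalIntegral.integral_interval_sub_left
      (hβII 0 (t - tp (j-1)) le_rfl (by linarith [ht.1]))
      (hβII 0 (t - tp j) le_rfl (by linarith [ht.1]))]
  have hqn : qweight β tp n n = ∫ t in a..b, F (t - a) := by
    apply intervalIntegral.integral_congr
    intro t ht
    rw [Set.uIcc_of_le hab] at ht
    have hmin : min (tp n) t = t := min_eq_right ht.2
    simp only
    rw [hmin, intervalIntegral.integral_comp_sub_left β t, sub_self]
  set G : ℕ → ℝ := fun m => ∫ t in a..b, F (t - tp m) with hG
  have hsum : ∑ j ∈ Finset.Ico 1 n, qweight β tp n j = G 0 - G (n-1) := by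
    have : ∀ j ∈ Finset.Ico 1 n, qweight β tp n j = G (j-1) - G j := by
      intro j hj
      rw [Finset.mem_Ico] at hj
      rw [hq1 j hj.1 hj.2]
      exact intervalIntegral.integral_sub
        (hGint (j-1) (htpa (j-1) (Nat.sub_le_sub_right (le_of_lt hj.2) 1))
          (htpm (j-1) (le_trans (Nat.sub_le j 1) (le_of_lt hj.2))))
        (hGint j (htpa j (Nat.le_sub_one_of_lt hj.2)) (htpm j (le_of_lt hj.2)))
    rw [Finset.sum_congr rfl this, Finset.sum_Ico_eq_sum_range]
    have : ∀ i, G (1 + i - 1) - G (1 + i) = G i - G (i+1) := by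
      intro i; congr 2 <;> omega
    simp only [this]
    exact Finset.sum_range_sub' G (n-1)
  have htot : ∑ j ∈ Finset.Icc 1 n, qweight β tp n j = G 0 := by
    have : Finset.Icc 1 n = Finset.Ico 1 (n+1) := by rw [Finset.Ico_add_one_right_eq_Icc]
    rw [this, Finset.sum_Ico_succ_top h1, hsum, hqn]
    have : G (n-1) = ∫ t in a..b, F (t - a) := rfl
    rw [this]; ring
  have hG0 : G 0 = ∫ t in a..b, F t := by
    simp only [hG, ht0, sub_zero]
  -- final computation
  have hFint : IntervalIntegrable F volume a b := by
    have := hGint 0 (by rw [ht0]; exact h0a) (by rw [ht0])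
    simpa [ht0] using this
  have : ∫ t in a..b, etaFun β t = (∫ t in a..b, (1:ℝ)) - ∫ t in a..b, F t := by
    rw [← intervalIntegral.integral_sub intervalIntegrable_const hFint]
    rfl
  rw [this, htot, hG0]
  simp [kstep, intervalIntegral.integral_const]
  rfl


/-- Energy identity for the dG(0) scheme (Theorem 4.1, case `l = −1`).
Here `sqrtA` is the positive square root `A^{1/2}` of `A` and `invSqrtA = A^{−1/2}`
is its inverse. -/
theorem dG0_energy_identity_weak
    {H : Type*} [NormedAddCommGroup H] [InnerProductSpace ℝ H] [CompleteSpace H]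
    (N : ℕ) (hN : 1 ≤ N) (tp : ℕ → ℝ) (ht0 : tp 0 = 0)
    (htmono : ∀ n < N, tp n < tp (n + 1))
    (β : ℝ → ℝ) (γ : ℝ) (hγ0 : 0 < γ) (hγ1 : γ < 1)
    (hβnonneg : ∀ s ∈ Set.Ioi (0:ℝ), 0 ≤ β s)
    (hβmono : AntitoneOn β (Set.Ioi 0))
    (hβint : LocallyIntegrableOn β (Set.Ioi 0))
    (hβγ : ∫ s in Set.Ioi (0:ℝ), β s = γ)
    (ρ : ℝ) (hρ : 0 < ρ)
    (A sqrtA invSqrtA : H →L[ℝ] H)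
    (hAsym : ∀ x y : H, ⟪A x, y⟫ = ⟪x, A y⟫)
    (hApos : ∃ c > 0, ∀ x : H, c * ‖x‖ ^ 2 ≤ ⟪A x, x⟫)
    (hsqrtAsym : ∀ x y : H, ⟪sqrtA x, y⟫ = ⟪x, sqrtA y⟫)
    (hsqrtApos : ∀ x : H, 0 ≤ ⟪sqrtA x, x⟫)
    (hsqrtA : ∀ x : H, sqrtA (sqrtA x) = A x)
    (hinv : ∀ x : H, sqrtA (invSqrtA x) = x)
    (hinv' : ∀ x : H, invSqrtA (sqrtA x) = x)
    (u0 v0 : H) (f1 f2 : ℝ → H)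
    (hf1 : IntegrableOn f1 (Set.Icc 0 (tp N)))
    (hf2 : IntegrableOn f2 (Set.Icc 0 (tp N)))
    (U1 U2 : ℕ → H) (hU10 : U1 0 = u0) (hU20 : U2 0 = v0)
    (hscheme1 : ∀ n : ℕ, 1 ≤ n → n ≤ N →
      U1 n - U1 (n - 1) = kstep tp n • U2 n + kstep tp n • iavg tp f1 n)
    (hscheme2 : ∀ n : ℕ, 1 ≤ n → n ≤ N →
      ρ • (U2 n - U2 (n - 1)) + (kstep tp n - qweight β tp n n) • A (U1 n)
          - ∑ j ∈ Finset.Ico 1 n, qweight β tp n j • A (U1 j)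
        = kstep tp n • iavg tp f2 n) :
    etaAvg β tp N * ‖U1 N‖ ^ 2 + ρ * ‖invSqrtA (U2 N)‖ ^ 2
      + ∑ n ∈ Finset.Icc 1 N, kstep tp n *
          (-((etaAvg β tp n - etaAvg β tp (n - 1)) / kstep tp n) * ‖U1 (n - 1)‖ ^ 2
            + kstep tp n * etaAvg β tp n * ‖(kstep tp n)⁻¹ • (U1 n - U1 (n - 1))‖ ^ 2)
      + ∑ n ∈ Finset.Icc 2 N, ∑ j ∈ Finset.Ico 1 n, qweight β tp n j *
          ((‖U1 n - U1 j‖ ^ 2 - ‖U1 (n - 1) - U1 j‖ ^ 2) / kstep tp n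
            + kstep tp n * ‖(kstep tp n)⁻¹ • ((U1 n - U1 j) - (U1 (n - 1) - U1 j))‖ ^ 2)
      + ρ * ∑ n ∈ Finset.Icc 1 N, ‖invSqrtA (U2 n - U2 (n - 1))‖ ^ 2
    = ‖u0‖ ^ 2 + ρ * ‖invSqrtA v0‖ ^ 2
      + 2 * ∑ n ∈ Finset.Icc 1 N, kstep tp n * etaAvg β tp n * ⟪iavg tp f1 n, U1 n⟫
      + 2 * ∑ n ∈ Finset.Icc 1 N, kstep tp n * ⟪invSqrtA (iavg tp f2 n), invSqrtA (U2 n)⟫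
      + 2 * ∑ n ∈ Finset.Icc 2 N, ∑ j ∈ Finset.Ico 1 n,
          qweight β tp n j * ⟪iavg tp f1 n, U1 n - U1 j⟫ := by
  -- basic monotonicity facts
  have hmono : ∀ i j : ℕ, i ≤ j → j ≤ N → tp i ≤ tp j := by
    intro i j hij hjN
    induction j with
    | zero => simp [Nat.le_zero.mp hij]
    | succ m ih =>
      rcases Nat.lt_or_ge i (m+1) with h | h
      · exact le_trans (ih (by omega) (by omega)) (le_of_lt (htmono m (by omega)))
      · have : i = m+1 := by omega
        simp [this]
  have hk : ∀ n : ℕ, 1 ≤ n → n ≤ N → 0 < kstep tp n := by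
    intro n h1 h2
    have h := htmono (n-1) (by omega)
    have hn : n - 1 + 1 = n := by omega
    rw [hn] at h
    simp only [kstep]
    linarith
  -- integrability of β
  have hβInt : IntegrableOn β (Set.Ioi 0) := by
    by_contra h
    rw [MeasureTheory.integral_undef h] at hβγ
    linarith
  -- the key relation between etaAvg and qweight
  have hηω : ∀ n : ℕ, 1 ≤ n → n ≤ N →
      kstep tp n * etaAvg β tp n
        = kstep tp n - ∑ j ∈ Finset.Icc 1 n, qweight β tp n j := by
    intro n h1 h2
    have hk0 : kstep tp n ≠ 0 := ne_of_gt (hk n h1 h2)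
    rw [etaAvg, if_neg (by omega), ← mul_assoc, mul_inv_cancel₀ hk0, one_mul]
    exact stepA β hβInt tp ht0 N hmono n h1 h2
  -- inner product with A⁻¹ via invSqrtA
  have lemA : ∀ x y : H, ⟪invSqrtA (A x), invSqrtA y⟫ = ⟪x, y⟫ := by
    intro x y
    have h : invSqrtA (A x) = sqrtA x := by rw [← hsqrtA x, hinv']
    rw [h, hsqrtAsym, hinv]
  -- polarization identity
  have pol : ∀ x y : H, ‖x‖^2 - ‖y‖^2 + ‖x - y‖^2 = 2*⟪x - y, x⟫ := by
    intro x y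
    rw [norm_sub_sq_real, inner_sub_left, real_inner_self_eq_norm_sq, real_inner_comm]
    ring
  -- the telescoped "energy"
  set Kf : ℕ → ℝ := fun m => ρ * ‖invSqrtA (U2 m)‖ ^ 2 + etaAvg β tp m * ‖U1 m‖ ^ 2 with hKf
  -- the per-step energy identity
  have key : ∀ n : ℕ, 1 ≤ n → n ≤ N →
      (Kf n - Kf (n - 1))
      + (kstep tp n *
          (-((etaAvg β tp n - etaAvg β tp (n - 1)) / kstep tp n) * ‖U1 (n - 1)‖ ^ 2
            + kstep tp n * etaAvg β tp n * ‖(kstep tp n)⁻¹ • (U1 n - U1 (n - 1))‖ ^ 2)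
        + (∑ j ∈ Finset.Ico 1 n, qweight β tp n j *
            ((‖U1 n - U1 j‖ ^ 2 - ‖U1 (n - 1) - U1 j‖ ^ 2) / kstep tp n
              + kstep tp n * ‖(kstep tp n)⁻¹ • ((U1 n - U1 j) - (U1 (n - 1) - U1 j))‖ ^ 2))
        + ρ * ‖invSqrtA (U2 n - U2 (n - 1))‖ ^ 2)
      = 2 * (kstep tp n * etaAvg β tp n * ⟪iavg tp f1 n, U1 n⟫)
        + 2 * (kstep tp n * ⟪invSqrtA (iavg tp f2 n), invSqrtA (U2 n)⟫)
        + 2 * (∑ j ∈ Finset.Ico 1 n, qweight β tp n j * ⟪iavg tp f1 n, U1 n - U1 j⟫) := by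
    intro n hn1 hnN
    simp only [hKf]
    have hkpos : 0 < kstep tp n := hk n hn1 hnN
    have hk0 : kstep tp n ≠ 0 := ne_of_gt hkpos
    -- inner products with the first scheme equation
    have hip : ∀ x : H, ⟪x, U1 n - U1 (n-1)⟫
        = kstep tp n * ⟪x, U2 n⟫ + kstep tp n * ⟪x, iavg tp f1 n⟫ := by
      intro x
      rw [hscheme1 n hn1 hnN, inner_add_right, real_inner_smul_right, real_inner_smul_right]
    have hsm : ∀ x : H, ‖(kstep tp n)⁻¹ • x‖^2 = ((kstep tp n)⁻¹)^2 * ‖x‖^2 := by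
      intro x; rw [norm_smul, mul_pow, Real.norm_eq_abs, sq_abs]
    -- scalarized second scheme equation
    have e2 : ρ * (2 * ⟪invSqrtA (U2 n) - invSqrtA (U2 (n-1)), invSqrtA (U2 n)⟫)
          + (kstep tp n - qweight β tp n n) * (2 * ⟪U1 n, U2 n⟫)
          - 2 * ∑ j ∈ Finset.Ico 1 n, qweight β tp n j * ⟪U1 j, U2 n⟫
        = kstep tp n * (2 * ⟪invSqrtA (iavg tp f2 n), invSqrtA (U2 n)⟫) := by
      have h := congrArg (fun x : H => 2 * ⟪invSqrtA x, invSqrtA (U2 n)⟫) (hscheme2 n hn1 hnN)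
      simp only [map_add, map_sub, _root_.map_smul, map_sum, inner_add_left, inner_sub_left,
        real_inner_smul_left, sum_inner, lemA] at h
      simp only [inner_sub_left]
      linear_combination h
    -- decomposition of the quadrature coefficient
    have hc : kstep tp n - qweight β tp n n
        = kstep tp n * etaAvg β tp n + ∑ j ∈ Finset.Ico 1 n, qweight β tp n j := by
      have h := hηω n hn1 hnN
      have hIcc : Finset.Icc 1 n = Finset.Ico 1 (n+1) := (Finset.Ico_add_one_right_eq_Icc 1 n).symm
      rw [hIcc, Finset.sum_Ico_succ_top hn1] at h
      linarith
    -- per-j transformation of the double-sum summand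
    have hper : ∀ j ∈ Finset.Ico 1 n, qweight β tp n j *
          ((‖U1 n - U1 j‖ ^ 2 - ‖U1 (n - 1) - U1 j‖ ^ 2) / kstep tp n
            + kstep tp n * ‖(kstep tp n)⁻¹ • ((U1 n - U1 j) - (U1 (n - 1) - U1 j))‖ ^ 2)
        = qweight β tp n j * (2 * ⟪U1 n, U2 n⟫)
          - 2 * (qweight β tp n j * ⟪U1 j, U2 n⟫)
          + 2 * (qweight β tp n j * ⟪iavg tp f1 n, U1 n - U1 j⟫) := by
      intro j hj
      have hd : (U1 n - U1 j) - (U1 (n-1) - U1 j) = U1 n - U1 (n-1) := by abel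
      have hp := pol (U1 n - U1 j) (U1 (n-1) - U1 j)
      rw [hd, real_inner_comm] at hp
      have h2 := hip (U1 n - U1 j)
      rw [real_inner_comm (iavg tp f1 n) (U1 n - U1 j)] at h2
      simp only [inner_sub_left] at hp h2
      have hP : ‖U1 n - U1 j‖ ^ 2 - ‖U1 (n - 1) - U1 j‖ ^ 2
          = 2 * (kstep tp n * ⟪U1 n, U2 n⟫) - 2 * (kstep tp n * ⟪U1 j, U2 n⟫)
            + 2 * (kstep tp n * ⟪iavg tp f1 n, U1 n - U1 j⟫)
            - ‖U1 n - U1 (n-1)‖ ^ 2 := by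
        linear_combination hp + 2 * h2
      rw [hd, hsm, hP]
      field_simp
      ring
    -- remaining scalar identities
    have hT : kstep tp n *
          (-((etaAvg β tp n - etaAvg β tp (n - 1)) / kstep tp n) * ‖U1 (n - 1)‖ ^ 2
            + kstep tp n * etaAvg β tp n * ‖(kstep tp n)⁻¹ • (U1 n - U1 (n - 1))‖ ^ 2)
        = -(etaAvg β tp n - etaAvg β tp (n - 1)) * ‖U1 (n - 1)‖ ^ 2
            + etaAvg β tp n * ‖U1 n - U1 (n - 1)‖ ^ 2 := by
      rw [hsm]; field_simp
    have hpol1 := pol (U1 n) (U1 (n-1))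
    rw [real_inner_comm] at hpol1
    have hipn := hip (U1 n)
    have hpol2 := pol (invSqrtA (U2 n)) (invSqrtA (U2 (n-1)))
    have hmap : invSqrtA (U2 n - U2 (n-1)) = invSqrtA (U2 n) - invSqrtA (U2 (n-1)) :=
      map_sub invSqrtA _ _
    rw [hmap, hT, Finset.sum_congr rfl hper, Finset.sum_add_distrib, Finset.sum_sub_distrib,
      ← Finset.sum_mul, ← Finset.mul_sum, ← Finset.mul_sum]
    linear_combination ρ * hpol2 + etaAvg β tp n * hpol1 + 2 * etaAvg β tp n * hipn
      + (2 * kstep tp n * etaAvg β tp n) * (real_inner_comm (iavg tp f1 n) (U1 n))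
      - (2 * ⟪U1 n, U2 n⟫) * hc + e2
  -- sum the per-step identities
  have keysum := Finset.sum_congr rfl
    (fun n hn => key n (Finset.mem_Icc.mp hn).1 (Finset.mem_Icc.mp hn).2)
  simp only [Finset.sum_add_distrib] at keysum
  rw [tele_aux Kf N, ← Finset.mul_sum, ← Finset.mul_sum, ← Finset.mul_sum,
    ← Finset.mul_sum] at keysum
  have hKN : Kf N = ρ * ‖invSqrtA (U2 N)‖ ^ 2 + etaAvg β tp N * ‖U1 N‖ ^ 2 := by
    rw [hKf]
  have hK0 : Kf 0 = ρ * ‖invSqrtA v0‖ ^ 2 + ‖u0‖ ^ 2 := by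
    rw [hKf]
    simp [hU10, hU20, etaAvg]
  -- reduce the Icc 2 N sums to Icc 1 N sums
  have hW12 : ∀ (f : ℕ → ℕ → ℝ),
      ∑ n ∈ Finset.Icc 1 N, ∑ j ∈ Finset.Ico 1 n, f n j
        = ∑ n ∈ Finset.Icc 2 N, ∑ j ∈ Finset.Ico 1 n, f n j := by
    intro f
    rw [← Finset.Ico_add_one_right_eq_Icc 1 N, ← Finset.Ico_add_one_right_eq_Icc 2 N,
      Finset.sum_eq_sum_Ico_succ_bot (by omega : 1 < N+1)]
    simp
  have hW12a : (∑ n ∈ Finset.Icc 1 N, ∑ j ∈ Finset.Ico 1 n, qweight β tp n j *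
          ((‖U1 n - U1 j‖ ^ 2 - ‖U1 (n - 1) - U1 j‖ ^ 2) / kstep tp n
            + kstep tp n * ‖(kstep tp n)⁻¹ • ((U1 n - U1 j) - (U1 (n - 1) - U1 j))‖ ^ 2))
      = ∑ n ∈ Finset.Icc 2 N, ∑ j ∈ Finset.Ico 1 n, qweight β tp n j *
          ((‖U1 n - U1 j‖ ^ 2 - ‖U1 (n - 1) - U1 j‖ ^ 2) / kstep tp n
            + kstep tp n * ‖(kstep tp n)⁻¹ • ((U1 n - U1 j) - (U1 (n - 1) - U1 j))‖ ^ 2) :=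
    hW12 _
  have hW12b : (∑ n ∈ Finset.Icc 1 N, ∑ j ∈ Finset.Ico 1 n,
          qweight β tp n j * ⟪iavg tp f1 n, U1 n - U1 j⟫)
      = ∑ n ∈ Finset.Icc 2 N, ∑ j ∈ Finset.Ico 1 n,
          qweight β tp n j * ⟪iavg tp f1 n, U1 n - U1 j⟫ :=
    hW12 _
  linear_combination keysum - hW12a + 2 * hW12b - hKN + hK0
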